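/- Let r ≥ 2 and let y be the positive unit Perron eigenvector of T_{n,r} (n sufficiently large). If V₁ is a part of size ⌊n/r⌋ with common entry value y₁ and V₂ is a part of size ⌈n/r⌉ with common entry value y₂, then (1 − 1/n)·y₁ ≤ y₂ ≤ y₁. -/

import Mathlib

open SimpleGraph Finset

/-- Entries of the Perron vector of the Turán graph: if `y₁` is the common value on a
part of size `⌊n/r⌋` and `y₂` the common value on a part of size `⌈n/r⌉`, then
`(1 - 1/n)·y₁ ≤ y₂ ≤ y₁`. -/
theorem turan_perron_entries (r : ℕ) (hr : 2 ≤ r) :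
    ∃ N : ℕ, ∀ n ≥ N, ∀ (ρ : ℝ) (y : Fin n → ℝ),
      (∀ v, 0 < y v) → (∑ v : Fin n, y v ^ 2 = 1) →
      ((turanGraph n r).adjMatrix ℝ).mulVec y = ρ • y →
      ∀ c₁ c₂ : ℕ, c₁ < r → c₂ < r →
      (univ.filter (fun v : Fin n => v.val % r = c₁)).card = n / r →
      (univ.filter (fun v : Fin n => v.val % r = c₂)).card = (n + r - 1) / r →
      ∀ y₁ y₂ : ℝ,
      (∀ v : Fin n, v.val % r = c₁ → y v = y₁) →
      (∀ v : Fin n, v.val % r = c₂ → y v = y₂) →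
      (1 - 1 / (n : ℝ)) * y₁ ≤ y₂ ∧ y₂ ≤ y₁ := by
  refine ⟨r, fun n hn ρ y hy _ hmul c₁ c₂ hc₁ hc₂ hcard₁ hcard₂ y₁ y₂ hy₁ hy₂ => ?_⟩
  have hr0 : 0 < r := by omega
  have hn2 : 2 ≤ n := le_trans hr hn
  set S : ℝ := ∑ v : Fin n, y v with hS
  have hSpos : 0 < S := Finset.sum_pos (fun v _ => hy v) ⟨⟨0, by omega⟩, mem_univ _⟩
  -- key equation
  have key : ∀ v : Fin n, ρ * y v =
      S - ∑ w ∈ univ.filter (fun w : Fin n => w.val % r = v.val % r), y w := by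
    intro v
    have h := congrFun hmul v
    rw [adjMatrix_mulVec_apply] at h
    have hnb : (turanGraph n r).neighborFinset v
        = univ.filter (fun w : Fin n => ¬ (w.val % r = v.val % r)) := by
      ext w
      rw [mem_neighborFinset]
      simp [turanGraph, eq_comm]
    rw [hnb] at h
    have hsplit := Finset.sum_filter_add_sum_filter_not univ
      (fun w : Fin n => w.val % r = v.val % r) y
    have : (ρ • y) v = ρ * y v := rfl
    rw [this] at h
    linarith [hsplit, h]
  -- class card bound
  have hclasscard : ∀ j : ℕ,
      (univ.filter (fun v : Fin n => v.val % r = j)).card ≤ (n + r - 1) / r := by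
    intro j
    have : (univ.filter (fun v : Fin n => v.val % r = j)).card
        ≤ (Finset.range ((n + r - 1) / r)).card := by
      apply Finset.card_le_card_of_injOn (fun v => v.val / r)
      · intro v hv
        simp only [Finset.mem_coe, mem_filter, mem_univ, true_and] at hv
        simp only [Finset.mem_coe, Finset.mem_range]
        have h1 : v.val / r ≤ (n - 1) / r := Nat.div_le_div_right (by omega)
        have h2 : (n - 1) / r + 1 = (n + r - 1) / r := by
          rw [← Nat.add_div_right _ hr0]; congr 1; omega
        omega
      · intro a ha b hb hab
        simp only [coe_filter, mem_univ, true_and, Set.mem_setOf_eq] at ha hb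
        beta_reduce at hab
        obtain ⟨p, hp⟩ := a
        obtain ⟨q, hq⟩ := b
        simp only [Fin.val_mk, Fin.mk.injEq] at ha hb hab ⊢
        have h1 := Nat.div_add_mod p r
        have h2 := Nat.div_add_mod q r
        rw [hab, ha] at h1
        rw [hb] at h2
        omega
    simpa using this
  -- ρ ≥ n - b
  set b : ℝ := (((n + r - 1) / r : ℕ) : ℝ) with hb
  have hρb : (n : ℝ) ≤ ρ + b := by
    have hsum : ρ * S = (n : ℝ) * S -
        ∑ v : Fin n, ∑ w ∈ univ.filter (fun w : Fin n => w.val % r = v.val % r), y w := by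
      have := Finset.sum_congr rfl (fun v (_ : v ∈ (univ : Finset (Fin n))) => key v)
      rw [← Finset.mul_sum] at this
      rw [this, Finset.sum_sub_distrib]
      simp [mul_comm]
    have hT : (∑ v : Fin n, ∑ w ∈ univ.filter (fun w : Fin n => w.val % r = v.val % r), y w)
        ≤ b * S := by
      have hswap : (∑ v : Fin n, ∑ w ∈ univ.filter (fun w : Fin n => w.val % r = v.val % r), y w)
          = ∑ w : Fin n, ((univ.filter (fun v : Fin n => v.val % r = w.val % r)).card : ℝ) * y w := by
        rw [Finset.sum_comm' (s := univ) (t := fun _ => univ.filter _)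
          (t' := univ) (s' := fun w => univ.filter (fun v : Fin n => v.val % r = w.val % r))]
        · simp [Finset.sum_const, nsmul_eq_mul]
        · intro v w
          simp [mem_filter, eq_comm, and_comm]
      rw [hswap, hS, Finset.mul_sum]
      apply Finset.sum_le_sum
      intro w _
      have := hclasscard (w.val % r)
      have hyw := hy w
      have : ((univ.filter (fun v : Fin n => v.val % r = w.val % r)).card : ℝ) ≤ b := by
        rw [hb]; exact_mod_cast this
      nlinarith
    nlinarith
  -- part equations
  set a : ℝ := (((n / r : ℕ)) : ℝ) with ha
  have hab : a ≤ b := by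
    rw [ha, hb]
    have : n / r ≤ (n + r - 1) / r := Nat.div_le_div_right (by omega)
    exact_mod_cast this
  have hba : b ≤ a + 1 := by
    have hnat : (n + r - 1) / r ≤ n / r + 1 := by
      have h2 : (n + r) / r = n / r + 1 := Nat.add_div_right _ hr0
      have h3 : (n + r - 1) / r ≤ (n + r) / r := Nat.div_le_div_right (by omega)
      omega
    rw [ha, hb]
    exact_mod_cast hnat
  -- exists vertex in each class
  have hex : ∀ (c : ℕ), (univ.filter (fun v : Fin n => v.val % r = c)).card ≥ 1 →
      ∃ v : Fin n, v.val % r = c := by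
    intro c hc
    obtain ⟨v, hv⟩ := Finset.card_pos.mp hc
    exact ⟨v, (mem_filter.mp hv).2⟩
  have hd1 : 1 ≤ n / r := (Nat.one_le_div_iff hr0).mpr hn
  have hd2 : 1 ≤ (n + r - 1) / r := (Nat.one_le_div_iff hr0).mpr (by omega)
  obtain ⟨v₁, hv₁⟩ := hex c₁ (by rw [hcard₁]; exact hd1)
  obtain ⟨v₂, hv₂⟩ := hex c₂ (by rw [hcard₂]; exact hd2)
  have hpart : ∀ (c : ℕ) (z : ℝ), (∀ v : Fin n, v.val % r = c → y v = z) →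
      ∀ v : Fin n, v.val % r = c →
      ∑ w ∈ univ.filter (fun w : Fin n => w.val % r = v.val % r), y w
        = ((univ.filter (fun v : Fin n => v.val % r = c)).card : ℝ) * z := by
    intro c z hz v hv
    rw [hv]
    rw [Finset.sum_congr rfl (fun w hw => hz w (mem_filter.mp hw).2)]
    simp [mul_comm]
  have E1 : (ρ + a) * y₁ = S := by
    have := key v₁
    rw [hpart c₁ y₁ hy₁ v₁ hv₁, hcard₁, hy₁ v₁ hv₁] at this
    rw [ha]; linarith
  have E2 : (ρ + b) * y₂ = S := by
    have := key v₂
    rw [hpart c₂ y₂ hy₂ v₂ hv₂, hcard₂, hy₂ v₂ hv₂] at this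
    rw [hb]; linarith
  have hy1 : 0 < y₁ := hy₁ v₁ hv₁ ▸ hy v₁
  have hy2 : 0 < y₂ := hy₂ v₂ hv₂ ▸ hy v₂
  have hnR : (2 : ℝ) ≤ (n : ℝ) := by exact_mod_cast hn2
  have hinv : (1 / (n : ℝ)) * n = 1 := by
    field_simp
  have hn0 : (0 : ℝ) < n := by positivity
  have hpb : 0 < ρ + b := by linarith
  have hpa : 0 < ρ + a := by linarith
  constructor
  · have h1 : (1 : ℝ) ≤ (ρ + b) / n := (one_le_div hn0).mpr hρb
    have hkey : (1 - 1 / (n : ℝ)) * (ρ + b) ≤ ρ + a := by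
      have heq : (1 - 1 / (n : ℝ)) * (ρ + b) = (ρ + b) - (ρ + b) / n := by
        ring
      rw [heq]
      linarith
    have h2 := mul_le_mul_of_nonneg_right hkey hy1.le
    have h5 : (ρ + b) * ((1 - 1 / (n : ℝ)) * y₁) ≤ (ρ + b) * y₂ := by
      calc (ρ + b) * ((1 - 1 / (n : ℝ)) * y₁) = (1 - 1 / (n : ℝ)) * (ρ + b) * y₁ := by ring
        _ ≤ (ρ + a) * y₁ := h2
        _ = (ρ + b) * y₂ := by rw [E1, E2]
    exact le_of_mul_le_mul_left h5 hpb
  · have h3 := mul_le_mul_of_nonneg_right hab hy2.le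
    have h4 : (ρ + a) * y₂ ≤ (ρ + a) * y₁ := by nlinarith [h3, E1, E2]
    exact le_of_mul_le_mul_left h4 hpa
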